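/- Let q : (0,∞) → ℝ be measurable with p_*·1_{{s>s_*}} ≤ q(s) ≤ p_∞ for constants p_*, p_∞, s_* > 0, let n₀ ∈ L¹(0,∞) be nonnegative with g := ∫₀^∞ n₀(s) ds, and let n be the mild solution of the linear renewal equation with rate q and initial datum n₀, with activity N(t) := ∫₀^∞ q(s) n(t,s) ds. Then N(t) ≥ p_*·e^{−p_∞ t}·g for every t > s_*. -/

import Mathlib

open MeasureTheory Set Real Filter

set_option maxHeartbeats 1000000
set_option linter.unusedVariables false
set_option linter.unnecessarySimpa false

private lemma gronwall_zero {f : ℝ → ℝ} {K M : ℝ} (hK : 0 ≤ K)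
    (hf_int : ∀ t ≥ (0:ℝ), IntervalIntegrable f volume 0 t)
    (hf0 : ∀ t ≥ (0:ℝ), 0 ≤ f t) (hfM : ∀ t ≥ (0:ℝ), f t ≤ M)
    (hstep : ∀ t ≥ (0:ℝ), f t ≤ K * ∫ r in (0:ℝ)..t, f r) :
    ∀ t ≥ (0:ℝ), f t = 0 := by
  have hM : 0 ≤ M := (hf0 0 le_rfl).trans (hfM 0 le_rfl)
  have key : ∀ k : ℕ, ∀ t ≥ (0:ℝ), f t ≤ M * (K * t) ^ k / (Nat.factorial k) := by
    intro k
    induction k with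
    | zero => intro t ht; simpa using hfM t ht
    | succ k ih =>
      intro t ht
      have hbd : ∀ r ∈ Icc (0:ℝ) t, f r ≤ M * (K * r) ^ k / (Nat.factorial k) := fun r hr => ih r hr.1
      have hcont : Continuous fun r : ℝ => M * (K * r) ^ k / (Nat.factorial k) := by continuity
      have h1 : (∫ r in (0:ℝ)..t, f r) ≤ ∫ r in (0:ℝ)..t, M * (K * r) ^ k / (Nat.factorial k) := by
        apply intervalIntegral.integral_mono_on ht (hf_int t ht)
          (hcont.intervalIntegrable 0 t) hbd
      have h2 : (∫ r in (0:ℝ)..t, M * (K * r) ^ k / (Nat.factorial k))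
          = M * K ^ k * t ^ (k+1) / ((Nat.factorial k) * (k+1)) := by
        have : ∀ r : ℝ, M * (K * r) ^ k / (Nat.factorial k)
            = (M * K ^ k / (Nat.factorial k)) * r ^ k := by
          intro r; rw [mul_pow]; ring
        simp_rw [this]
        rw [intervalIntegral.integral_const_mul, integral_pow]
        have : (Nat.factorial k : ℝ) ≠ 0 := Nat.cast_ne_zero.2 (Nat.factorial_ne_zero k)
        field_simp
        simp
      calc f t ≤ K * ∫ r in (0:ℝ)..t, f r := hstep t ht
        _ ≤ K * (M * K ^ k * t ^ (k+1) / ((Nat.factorial k) * (k+1))) := by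
            rw [← h2]; exact mul_le_mul_of_nonneg_left h1 hK
        _ = M * (K * t) ^ (k+1) / (Nat.factorial (k+1)) := by
            rw [Nat.factorial_succ, mul_pow]
            push_cast
            have : (Nat.factorial k : ℝ) ≠ 0 := Nat.cast_ne_zero.2 (Nat.factorial_ne_zero k)
            field_simp
            ring
  intro t ht
  have hlim : Tendsto (fun k : ℕ => M * (K * t) ^ k / (Nat.factorial k)) atTop (nhds 0) := by
    have := FloorSemiring.tendsto_pow_div_factorial_atTop (K * t)
    have h := this.const_mul M
    simpa [mul_div_assoc] using h
  have hle : f t ≤ 0 := ge_of_tendsto hlim (Eventually.of_forall fun k => key k t ht)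
  exact le_antisymm hle (hf0 t ht)



/-- Mild solution of the linear renewal equation
`∂ₜn + ∂ₛn + q(s) n = 0`, `n(t,0) = N(t) = ∫₀^∞ q(u) n(t,u) du`, with initial datum `n₀`,
viewed as a continuous bounded map `[0,∞) → L¹(0,∞)`. -/
def IsRenewalMild (q : ℝ → ℝ) (n₀ : ℝ → ℝ) (n : ℝ → ℝ → ℝ) : Prop :=
  (∀ t ≥ (0:ℝ), IntegrableOn (n t) (Ioi 0)) ∧
  (∃ C : ℝ, ∀ t ≥ (0:ℝ), (∫ s in Ioi (0:ℝ), |n t s|) ≤ C) ∧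
  (∀ t₀ ≥ (0:ℝ), Tendsto (fun t => ∫ s in Ioi (0:ℝ), |n t s - n t₀ s|)
    (nhdsWithin t₀ (Ici 0)) (nhds 0)) ∧
  ((n 0) =ᵐ[volume.restrict (Ioi 0)] n₀) ∧
  (∀ t > (0:ℝ),
    (∀ᵐ s ∂(volume.restrict (Ioi t)),
      n t s = n₀ (s - t) * Real.exp (-(∫ τ in (0:ℝ)..t, q (τ + s - t)))) ∧
    (∀ᵐ s ∂(volume.restrict (Ioo 0 t)),
      n t s = (∫ u in Ioi (0:ℝ), q u * n (t - s) u) * Real.exp (-(∫ τ in (0:ℝ)..s, q τ))))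

/-- Lower bound on the activity of the renewal semigroup:
`N(t) ≥ p_* e^{-p_∞ t} g` for all `t > s_*`. -/
theorem statement13
    (q : ℝ → ℝ) (pstar pinf sstar : ℝ)
    (hpstar : 0 < pstar) (hpinf : 0 < pinf) (hsstar : 0 < sstar)
    (hq_meas : Measurable q)
    (hq_nonneg : ∀ s : ℝ, 0 ≤ q s)
    (hq_lower : ∀ s : ℝ, sstar < s → pstar ≤ q s)
    (hq_upper : ∀ s : ℝ, q s ≤ pinf)
    (n₀ : ℝ → ℝ) (hn₀_int : IntegrableOn n₀ (Ioi 0))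
    (hn₀_nonneg : ∀ᵐ s ∂(volume.restrict (Ioi (0:ℝ))), 0 ≤ n₀ s)
    (g : ℝ) (hg : g = ∫ s in Ioi (0:ℝ), n₀ s)
    (n : ℝ → ℝ → ℝ) (hn : IsRenewalMild q n₀ n)
    :
    ∀ t > sstar, pstar * Real.exp (-(pinf * t)) * g ≤ ∫ u in Ioi (0:ℝ), q u * n t u := by
  obtain ⟨hint, ⟨C, hC⟩, hcont, h0, hev⟩ := hn
  set N : ℝ → ℝ := fun t => ∫ u in Ioi (0:ℝ), q u * n t u with hNdef
  -- Step A: integrability of q * n t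
  have hqn_int : ∀ t ≥ (0:ℝ), IntegrableOn (fun u => q u * n t u) (Ioi 0) := by
    intro t ht
    apply Integrable.mono' (((hint t ht).abs.const_mul pinf))
      (hq_meas.aestronglyMeasurable.mul (hint t ht).aestronglyMeasurable)
    filter_upwards with u
    simp only [Pi.mul_apply]
    rw [Real.norm_eq_abs, abs_mul, abs_of_nonneg (hq_nonneg u)]
    exact mul_le_mul_of_nonneg_right (hq_upper u) (abs_nonneg _)
  -- Step B: continuity of N on Ici 0
  have hNdiff : ∀ t ≥ (0:ℝ), ∀ t₀ ≥ (0:ℝ),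
      |N t - N t₀| ≤ pinf * ∫ s in Ioi (0:ℝ), |n t s - n t₀ s| := by
    intro t ht t₀ ht₀
    have h1 : N t - N t₀ = ∫ u in Ioi (0:ℝ), (q u * n t u - q u * n t₀ u) :=
      (integral_sub (hqn_int t ht) (hqn_int t₀ ht₀)).symm
    rw [h1]
    calc |∫ u in Ioi (0:ℝ), (q u * n t u - q u * n t₀ u)|
        ≤ ∫ u in Ioi (0:ℝ), |q u * n t u - q u * n t₀ u| := by
          simpa only [Real.norm_eq_abs] using
            norm_integral_le_integral_norm (μ := volume.restrict (Ioi 0))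
              (fun u => q u * n t u - q u * n t₀ u)
      _ ≤ ∫ u in Ioi (0:ℝ), pinf * |n t u - n t₀ u| := by
          apply integral_mono_ae (((hqn_int t ht).sub (hqn_int t₀ ht₀)).abs)
            (((hint t ht).sub (hint t₀ ht₀)).abs.const_mul pinf)
          filter_upwards with u
          simp only [Pi.sub_apply]
          rw [← mul_sub, abs_mul, abs_of_nonneg (hq_nonneg u)]
          exact mul_le_mul_of_nonneg_right (hq_upper u) (abs_nonneg _)
      _ = pinf * ∫ u in Ioi (0:ℝ), |n t u - n t₀ u| := integral_const_mul _ _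
  have hNcont : ContinuousOn N (Ici 0) := by
    intro t₀ ht₀
    have hb := (hcont t₀ ht₀).const_mul pinf
    rw [mul_zero] at hb
    have habs : Tendsto (fun t => |N t - N t₀|) (nhdsWithin t₀ (Ici 0)) (nhds 0) := by
      apply squeeze_zero' (Eventually.of_forall fun t => abs_nonneg _)
        ?_ hb
      filter_upwards [eventually_mem_nhdsWithin] with t ht
      exact hNdiff t ht t₀ ht₀
    have : Tendsto N (nhdsWithin t₀ (Ici 0)) (nhds (N t₀)) := by
      rw [← tendsto_sub_nhds_zero_iff, tendsto_zero_iff_norm_tendsto_zero]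
      simpa [Real.norm_eq_abs] using habs
    exact this
  -- Step C: bound on N
  have hNbound : ∀ t ≥ (0:ℝ), |N t| ≤ pinf * C := by
    intro t ht
    calc |N t| ≤ ∫ u in Ioi (0:ℝ), |q u * n t u| := by
          simpa only [Real.norm_eq_abs] using
            norm_integral_le_integral_norm (μ := volume.restrict (Ioi 0))
              (fun u => q u * n t u)
      _ ≤ ∫ u in Ioi (0:ℝ), pinf * |n t u| := by
          apply integral_mono_ae ((hqn_int t ht).abs) ((hint t ht).abs.const_mul pinf)
          filter_upwards with u
          rw [abs_mul, abs_of_nonneg (hq_nonneg u)]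
          exact mul_le_mul_of_nonneg_right (hq_upper u) (abs_nonneg _)
      _ = pinf * ∫ u in Ioi (0:ℝ), |n t u| := integral_const_mul _ _
      _ ≤ pinf * C := mul_le_mul_of_nonneg_left (hC t ht) hpinf.le
  -- Step D: N 0 ≥ 0
  have hN0 : 0 ≤ N 0 := by
    have h0' : (fun u => q u * n 0 u) =ᵐ[volume.restrict (Ioi 0)] fun u => q u * n₀ u :=
      h0.mono fun u hu => by simp only [hu]
    show 0 ≤ ∫ u in Ioi (0:ℝ), q u * n 0 u
    rw [integral_congr_ae h0']
    exact integral_nonneg_of_ae (hn₀_nonneg.mono fun u hu => mul_nonneg (hq_nonneg u) hu)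
  -- translation machinery
  have hmp : ∀ t : ℝ, MeasurePreserving (fun u : ℝ => u - t)
      (volume.restrict (Ioi t)) (volume.restrict (Ioi 0)) := by
    intro t
    have h1 : MeasurePreserving (fun u : ℝ => u - t) volume volume :=
      measurePreserving_sub_right volume t
    have h2 := h1.restrict_preimage (s := Ioi (0:ℝ)) measurableSet_Ioi
    have h3 : (fun u : ℝ => u - t) ⁻¹' Ioi 0 = Ioi t := by
      ext u; simp [sub_pos]
    rwa [h3] at h2
  have hemb : ∀ t : ℝ, MeasurableEmbedding (fun u : ℝ => u - t) := fun t =>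
    (MeasurableEquiv.subRight t).measurableEmbedding
  have hshift_nonneg : ∀ t : ℝ, ∀ᵐ u ∂volume.restrict (Ioi t), 0 ≤ n₀ (u - t) := fun t =>
    (hmp t).quasiMeasurePreserving.ae hn₀_nonneg
  have hshift_int : ∀ t : ℝ, IntegrableOn (fun u => n₀ (u - t)) (Ioi t) := by
    intro t
    exact ((hmp t).integrable_comp_emb (hemb t)).2 hn₀_int
  have hshift_eq : ∀ t : ℝ, (∫ u in Ioi t, n₀ (u - t)) = ∫ s in Ioi (0:ℝ), n₀ s := by
    intro t
    exact (hmp t).integral_comp (hemb t) n₀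
  -- splitting the integral
  have hsplit : ∀ t > (0:ℝ), N t = (∫ u in Ioc 0 t, q u * n t u) + ∫ u in Ioi t, q u * n t u := by
    intro t ht
    have : N t = ∫ u in Ioc 0 t ∪ Ioi t, q u * n t u := by
      rw [Ioc_union_Ioi_eq_Ioi ht.le]
    rw [this, setIntegral_union (Ioc_disjoint_Ioi le_rfl) measurableSet_Ioi
      ((hqn_int t ht.le).mono_set Ioc_subset_Ioi_self)
      ((hqn_int t ht.le).mono_set (Ioi_subset_Ioi ht.le))]
  -- tail nonnegativity
  have htail_nonneg : ∀ t > (0:ℝ), 0 ≤ ∫ u in Ioi t, q u * n t u := by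
    intro t ht
    apply integral_nonneg_of_ae
    filter_upwards [(hev t ht).1, hshift_nonneg t] with u h1 h2
    rw [h1]
    exact mul_nonneg (hq_nonneg u) (mul_nonneg h2 (Real.exp_pos _).le)
  -- φ = min (N r) 0
  have hφcont : ContinuousOn (fun r => min (N r) 0) (Ici 0) := fun x hx => (hNcont x hx).min continuousWithinAt_const
  have hres : ∀ t : ℝ, volume.restrict (Ioc (0:ℝ) t) = volume.restrict (Ioo 0 t) :=
    fun t => (Measure.restrict_congr_set Ioo_ae_eq_Ioc).symm
  have hmid : ∀ t > (0:ℝ),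
      pinf * ∫ r in (0:ℝ)..t, min (N r) 0 ≤ ∫ u in Ioc 0 t, q u * n t u := by
    intro t ht
    have hae : ∀ᵐ u ∂volume.restrict (Ioc (0:ℝ) t),
        pinf * min (N (t - u)) 0 ≤ q u * n t u := by
      rw [hres t]
      filter_upwards [(hev t ht).2, ae_restrict_mem measurableSet_Ioo] with u h1 h2
      have he1 : 0 ≤ ∫ τ in (0:ℝ)..u, q τ :=
        intervalIntegral.integral_nonneg h2.1.le (fun x _ => hq_nonneg x)
      have he2 : Real.exp (-(∫ τ in (0:ℝ)..u, q τ)) ≤ 1 :=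
        Real.exp_le_one_iff.2 (neg_nonpos.2 he1)
      have ha1 : 0 ≤ q u * Real.exp (-(∫ τ in (0:ℝ)..u, q τ)) :=
        mul_nonneg (hq_nonneg u) (Real.exp_pos _).le
      have ha2 : q u * Real.exp (-(∫ τ in (0:ℝ)..u, q τ)) ≤ pinf := by
        calc q u * Real.exp (-(∫ τ in (0:ℝ)..u, q τ)) ≤ pinf * 1 :=
              mul_le_mul (hq_upper u) he2 (Real.exp_pos _).le hpinf.le
          _ = pinf := mul_one pinf
      have hNtu : N (t - u) = ∫ v in Ioi (0:ℝ), q v * n (t - u) v := rfl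
      have key : q u * n t u
          = (q u * Real.exp (-(∫ τ in (0:ℝ)..u, q τ))) * N (t - u) := by
        rw [h1, hNtu]; ring
      rw [key]
      calc pinf * min (N (t - u)) 0
          ≤ (q u * Real.exp (-(∫ τ in (0:ℝ)..u, q τ))) * min (N (t - u)) 0 :=
            mul_le_mul_of_nonpos_right ha2 (min_le_right _ _)
        _ ≤ (q u * Real.exp (-(∫ τ in (0:ℝ)..u, q τ))) * N (t - u) :=
            mul_le_mul_of_nonneg_left (min_le_left _ _) ha1
    have hlhs_int : IntegrableOn (fun u => pinf * min (N (t - u)) 0) (Ioc 0 t) := by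
      have hc : ContinuousOn (fun u : ℝ => pinf * min (N (t - u)) 0) (Icc 0 t) := by
        apply continuousOn_const.mul
        apply hφcont.comp ((continuous_const.sub continuous_id).continuousOn)
        intro u hu
        exact mem_Ici.2 (by simp only [Pi.sub_apply, id]; linarith [hu.2])
      exact (hc.integrableOn_Icc).mono_set Ioc_subset_Icc_self
    have hmono := integral_mono_ae hlhs_int
      ((hqn_int t ht.le).mono_set Ioc_subset_Ioi_self) hae
    calc pinf * ∫ r in (0:ℝ)..t, min (N r) 0
        = ∫ u in Ioc 0 t, pinf * min (N (t - u)) 0 := by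
          rw [← intervalIntegral.integral_of_le ht.le, intervalIntegral.integral_const_mul]
          congr 1
          have hcs := intervalIntegral.integral_comp_sub_left
            (a := (0:ℝ)) (b := t) (fun r => min (N r) 0) t
          simp only [sub_zero, sub_self] at hcs
          exact hcs.symm
      _ ≤ ∫ u in Ioc 0 t, q u * n t u := hmono
  -- recursive inequality and Gronwall
  have hstep : ∀ t ≥ (0:ℝ), pinf * ∫ r in (0:ℝ)..t, min (N r) 0 ≤ N t := by
    intro t ht
    rcases eq_or_lt_of_le ht with h|h
    · simp [← h, hN0]
    · rw [hsplit t h]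
      have := htail_nonneg t h
      linarith [hmid t h]
  have hψ_zero : ∀ t ≥ (0:ℝ), -(min (N t) 0) = 0 := by
    apply gronwall_zero (f := fun r => -(min (N r) 0)) (M := pinf * C) hpinf.le
    · intro t ht
      apply ContinuousOn.intervalIntegrable
      apply (hφcont.neg).mono
      rw [uIcc_of_le ht]
      exact Icc_subset_Ici_self
    · intro t ht
      exact neg_nonneg.2 (min_le_right _ _)
    · intro t ht
      have h1 : -(min (N t) 0) ≤ |N t| := by
        rcases min_cases (N t) 0 with ⟨h,_⟩|⟨h,_⟩ <;> rw [h]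
        · exact neg_le_abs _
        · simpa using abs_nonneg (N t)
      exact h1.trans (hNbound t ht)
    · intro t ht
      have hInt : IntervalIntegrable (fun r => min (N r) 0) volume 0 t := by
        apply ContinuousOn.intervalIntegrable
        apply hφcont.mono
        rw [uIcc_of_le ht]
        exact Icc_subset_Ici_self
      have hneg : (∫ r in (0:ℝ)..t, -(min (N r) 0)) = -(∫ r in (0:ℝ)..t, min (N r) 0) :=
        intervalIntegral.integral_neg
      have h1 : -(N t) ≤ pinf * ∫ r in (0:ℝ)..t, -(min (N r) 0) := by
        rw [hneg, mul_neg]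
        linarith [hstep t ht]
      have h2 : (0:ℝ) ≤ pinf * ∫ r in (0:ℝ)..t, -(min (N r) 0) := by
        apply mul_nonneg hpinf.le
        apply intervalIntegral.integral_nonneg ht
        intro r _
        exact neg_nonneg.2 (min_le_right _ _)
      rw [show -(min (N t) 0) = max (-(N t)) (-(0:ℝ)) from (max_neg_neg _ _).symm, neg_zero]
      exact max_le h1 h2
  have hNnonneg : ∀ t ≥ (0:ℝ), 0 ≤ N t := by
    intro t ht
    have := hψ_zero t ht
    rw [neg_eq_zero] at this
    exact min_eq_right_iff.1 this
  -- final bound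
  intro t htst
  have ht : (0:ℝ) < t := hsstar.trans htst
  have hmid0 : 0 ≤ ∫ u in Ioc 0 t, q u * n t u := by
    apply integral_nonneg_of_ae
    rw [hres t]
    filter_upwards [(hev t ht).2, ae_restrict_mem measurableSet_Ioo] with u h1 h2
    rw [h1]
    have hNpos : 0 ≤ ∫ v in Ioi (0:ℝ), q v * n (t - u) v :=
      hNnonneg (t - u) (by linarith [h2.2])
    exact mul_nonneg (hq_nonneg u) (mul_nonneg hNpos (Real.exp_pos _).le)
  have hexp : ∀ u : ℝ, Real.exp (-(pinf * t))
      ≤ Real.exp (-(∫ τ in (0:ℝ)..t, q (τ + u - t))) := by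
    intro u
    have hqi : IntervalIntegrable (fun τ => q (τ + u - t)) volume 0 t := by
      rw [intervalIntegrable_iff]
      apply Integrable.mono' (g := fun _ => pinf)
        ((integrableOn_const_iff).2 (Or.inr measure_Ioc_lt_top))
        ((hq_meas.comp (by fun_prop : Measurable fun τ : ℝ => τ + u - t)).aestronglyMeasurable)
      filter_upwards with τ
      simp only [Function.comp_apply]
      rw [Real.norm_eq_abs, abs_of_nonneg (hq_nonneg _)]
      exact hq_upper _
    have hle : (∫ τ in (0:ℝ)..t, q (τ + u - t)) ≤ pinf * t := by
      have := intervalIntegral.integral_mono_on ht.le hqi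
        (intervalIntegrable_const (c := pinf)) (fun x _ => hq_upper (x + u - t))
      simpa [mul_comm] using this
    exact Real.exp_le_exp.2 (neg_le_neg hle)
  have htail : pstar * Real.exp (-(pinf * t)) * g ≤ ∫ u in Ioi t, q u * n t u := by
    have hae : ∀ᵐ u ∂volume.restrict (Ioi t),
        pstar * Real.exp (-(pinf * t)) * n₀ (u - t) ≤ q u * n t u := by
      filter_upwards [(hev t ht).1, hshift_nonneg t, ae_restrict_mem measurableSet_Ioi]
        with u h1 h2 h3
      rw [h1]
      have hqlow : pstar ≤ q u := hq_lower u (htst.trans h3)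
      calc pstar * Real.exp (-(pinf * t)) * n₀ (u - t)
          = pstar * (n₀ (u - t) * Real.exp (-(pinf * t))) := by ring
        _ ≤ q u * (n₀ (u - t) * Real.exp (-(∫ τ in (0:ℝ)..t, q (τ + u - t)))) := by
            apply mul_le_mul hqlow (mul_le_mul_of_nonneg_left (hexp u) h2)
              (mul_nonneg h2 (Real.exp_pos _).le) (hq_nonneg u)
    have hL : IntegrableOn (fun u => pstar * Real.exp (-(pinf * t)) * n₀ (u - t)) (Ioi t) :=
      (hshift_int t).const_mul _
    have hR := (hqn_int t ht.le).mono_set (Ioi_subset_Ioi ht.le)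
    have hm := integral_mono_ae hL hR hae
    calc pstar * Real.exp (-(pinf * t)) * g
        = ∫ u in Ioi t, pstar * Real.exp (-(pinf * t)) * n₀ (u - t) := by
          rw [integral_const_mul, hshift_eq t, ← hg]
      _ ≤ ∫ u in Ioi t, q u * n t u := hm
  have := hsplit t ht
  show pstar * Real.exp (-(pinf * t)) * g ≤ N t
  linarith
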